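/- Let A be a Dedekind domain with fraction field K, char K ≠ 2,3, and let L be a nondegenerate (étale) cubic K-algebra. Let ξ, η ∈ L be integral over A such that C = A·1 + A·ξ + A·η is a full-rank lattice in L. If the outer coefficients of the index form of C with respect to the basis (1, ξ, η) are both in A, then the entire index form is integral and C is a subring of L. -/

import Mathlib

open Polynomial Matrix


section aux
variable {A K : Type*} [CommRing A] [Field K] [Algebra A K]

lemma aux_pow_mulVec {M : Matrix (Fin 3) (Fin 3) K} {r : K} {v : Fin 3 → K}
    (hv : M.mulVec v = r • v) (k : ℕ) : (M ^ k).mulVec v = r ^ k • v := by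
  induction k with
  | zero => simp
  | succ k ih =>
    rw [pow_succ, ← Matrix.mulVec_mulVec, hv, Matrix.mulVec_smul, ih, smul_smul, pow_succ,
      mul_comm]

lemma aux_scalar_mulVec (r : K) (v : Fin 3 → K) :
    (Matrix.scalar (Fin 3) r).mulVec v = r • v := by
  ext i
  simp [Matrix.scalar, Matrix.mulVec, diagonal_dotProduct]

lemma aux_eval₂_mulVec (M : Matrix (Fin 3) (Fin 3) K) (r : K) (v : Fin 3 → K)
    (hv : M.mulVec v = r • v) (p : A[X]) :
    (Polynomial.eval₂ (algebraMap A (Matrix (Fin 3) (Fin 3) K)) M p).mulVec v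
      = Polynomial.eval₂ (algebraMap A K) r p • v := by
  induction p using Polynomial.induction_on' with
  | add p q hp hq => simp [eval₂_add, Matrix.add_mulVec, hp, hq, add_smul]
  | monomial k a =>
    rw [eval₂_monomial, eval₂_monomial, ← Matrix.mulVec_mulVec, aux_pow_mulVec hv,
      Matrix.mulVec_smul]
    have : (algebraMap A (Matrix (Fin 3) (Fin 3) K)) a
        = Matrix.scalar (Fin 3) (algebraMap A K a) := rfl
    rw [this, aux_scalar_mulVec, smul_smul, mul_comm]

end aux

section aux2
variable {A K : Type*} [CommRing A] [Field K] [Algebra A K]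

lemma aux_coeff_prod_integral (s : Multiset K) (hs : ∀ r ∈ s, IsIntegral A r) :
    ∀ k, IsIntegral A ((s.map (fun r => X - C r)).prod.coeff k) := by
  induction s using Multiset.induction_on with
  | empty =>
    intro k
    simp only [Multiset.map_zero, Multiset.prod_zero, coeff_one]
    split <;> [exact isIntegral_one; exact isIntegral_zero]
  | cons a s ih =>
    intro k
    have ha := hs a (Multiset.mem_cons_self a s)
    have hs' : ∀ r ∈ s, IsIntegral A r := fun r hr => hs r (Multiset.mem_cons_of_mem hr)
    rw [Multiset.map_cons, Multiset.prod_cons, sub_mul, coeff_sub, coeff_C_mul]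
    refine IsIntegral.sub ?_ ((ha).mul (ih hs' k))
    cases k with
    | zero => simpa using isIntegral_zero
    | succ k => rw [coeff_X_mul]; exact ih hs' k

lemma aux_charpoly_coeff_isIntegral (M : Matrix (Fin 3) (Fin 3) K)
    (hM : IsIntegral A M) (k : ℕ) : IsIntegral A (M.charpoly.coeff k) := by
  classical
  let Kb := AlgebraicClosure K
  rw [← isIntegral_algebraMap_iff (R := A) (algebraMap K Kb).injective]
  set Mb : Matrix (Fin 3) (Fin 3) Kb := M.map (algebraMap K Kb) with hMb
  have hcm : algebraMap K Kb (M.charpoly.coeff k) = Mb.charpoly.coeff k := by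
    rw [hMb, Matrix.charpoly_map, coeff_map]
  rw [hcm]
  -- every root of the charpoly of `Mb` is integral over `A`
  have hroot : ∀ r ∈ Mb.charpoly.roots, IsIntegral A r := by
    intro r hr
    have hr0 : Mb.charpoly.eval r = 0 :=
      (Polynomial.mem_roots (Matrix.charpoly_monic Mb).ne_zero).mp hr
    -- det (scalar r - Mb) = 0
    have hdet : (Matrix.scalar (Fin 3) r - Mb).det = 0 := by
      have : Mb.charpoly.eval r = (Matrix.scalar (Fin 3) r - Mb).det := by
        rw [Matrix.charpoly, ← Polynomial.coe_evalRingHom, RingHom.map_det]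
        congr 1
        ext i j
        by_cases h : i = j
        · subst h; simp [Matrix.charmatrix_apply_eq, Matrix.scalar_apply]
        · simp [Matrix.charmatrix_apply_ne _ _ _ h, Matrix.scalar_apply, h]
      rwa [this] at hr0
    obtain ⟨v, hv0, hv⟩ := (Matrix.exists_mulVec_eq_zero_iff).mpr hdet
    have hvec : Mb.mulVec v = r • v := by
      rw [Matrix.sub_mulVec, aux_scalar_mulVec, sub_eq_zero] at hv
      exact hv.symm
    obtain ⟨f, hfm, hf0⟩ := hM
    refine ⟨f, hfm, ?_⟩
    -- map the matrix relation to Kb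
    have hf0b : Polynomial.eval₂ (algebraMap A (Matrix (Fin 3) (Fin 3) Kb)) Mb f = 0 := by
      have h := congrArg ((algebraMap K Kb).mapMatrix) hf0
      simp only [map_zero] at h
      rw [Polynomial.hom_eval₂] at h
      have hcomp : ((algebraMap K Kb).mapMatrix).comp
          (algebraMap A (Matrix (Fin 3) (Fin 3) K))
            = algebraMap A (Matrix (Fin 3) (Fin 3) Kb) := by
        refine RingHom.ext fun a => ?_
        ext i j
        simp [Matrix.algebraMap_matrix_apply, apply_ite (algebraMap K Kb),
          ← IsScalarTower.algebraMap_apply A K Kb]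
      rwa [hcomp] at h
    have hkey := aux_eval₂_mulVec Mb r v hvec f
    rw [hf0b, Matrix.zero_mulVec] at hkey
    obtain ⟨i, hi⟩ := Function.ne_iff.mp hv0
    have h2 := congrFun hkey i
    simp only [Pi.zero_apply, Pi.smul_apply, smul_eq_mul] at h2
    show Polynomial.eval₂ (algebraMap A Kb) r f = 0
    rcases mul_eq_zero.mp h2.symm with h | h
    · exact h
    · exact absurd h (by simpa using hi)
  have hsplit := (IsAlgClosed.splits (k := Kb) Mb.charpoly).eq_prod_roots_of_monic
    (Matrix.charpoly_monic Mb)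
  rw [hsplit]
  exact aux_coeff_prod_integral _ hroot k

end aux2

section aux3
variable {A K : Type*} [CommRing A] [IsDomain A] [IsDedekindDomain A] [Field K]
  [Algebra A K] [IsFractionRing A K]

lemma aux_mem_range_of_cubic {x c2 c1 c0 : K}
    (h2 : c2 ∈ (algebraMap A K).range) (h1 : c1 ∈ (algebraMap A K).range)
    (h0 : c0 ∈ (algebraMap A K).range)
    (hx : x ^ 3 + c2 * x ^ 2 + c1 * x + c0 = 0) :
    x ∈ (algebraMap A K).range := by
  obtain ⟨e2, rfl⟩ := h2
  obtain ⟨e1, rfl⟩ := h1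
  obtain ⟨e0, rfl⟩ := h0
  have hint : IsIntegral A x := by
    refine ⟨X ^ 3 + C e2 * X ^ 2 + C e1 * X + C e0, ?_, ?_⟩
    · monicity!
    · simp only [eval₂_add, eval₂_mul, eval₂_pow, eval₂_X, eval₂_C]
      exact hx
  obtain ⟨y, hy⟩ := IsIntegrallyClosed.isIntegral_iff.mp hint
  exact ⟨y, hy⟩

lemma aux_coeff2 (c2 c1 c0 : K) :
    ((X:K[X]) ^ 3 + C c2 * X ^ 2 + C c1 * X + C c0).coeff 2 = c2 := by
  simp [coeff_add, coeff_C_mul, coeff_X_pow, coeff_C, coeff_X]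

lemma aux_coeff1 (c2 c1 c0 : K) :
    ((X:K[X]) ^ 3 + C c2 * X ^ 2 + C c1 * X + C c0).coeff 1 = c1 := by
  simp [coeff_add, coeff_C_mul, coeff_X_pow, coeff_C, coeff_X]

lemma aux_coeff0 (c2 c1 c0 : K) :
    ((X:K[X]) ^ 3 + C c2 * X ^ 2 + C c1 * X + C c0).coeff 0 = c0 := by
  simp [coeff_add, coeff_C_mul, coeff_X_pow, coeff_C, coeff_X]

end aux3



/-- The index form of the lattice `C = A⟨1, ξ, η⟩` in a cubic algebra `L` with
`K`-basis `b = (1, ξ, η)`: `Φ(x,y)` is the determinant of the matrix whose rows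
are the coordinates of `1, z, z²` for `z = x·ξ + y·η` (i.e. `1 ∧ z ∧ z²`). -/
noncomputable def indexForm {K L : Type*} [Field K] [CommRing L] [Algebra K L]
    (b : Module.Basis (Fin 3) K L) (ξ η : L) (x y : K) : K :=
  Matrix.det (Matrix.of fun i j : Fin 3 => b.repr ((x • ξ + y • η) ^ (i : ℕ)) j)

/-- If the outer coefficients of the index form of `C = A⟨1, ξ, η⟩` are integral,
then the whole index form has coefficients in `A` and `C` is a subring. -/
theorem cubic_lattice_ring_of_outer_coefficients
    (A : Type*) [CommRing A] [IsDomain A] [IsDedekindDomain A]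
    (K : Type*) [Field K] [Algebra A K] [IsFractionRing A K]
    (h2 : (2 : K) ≠ 0) (h3 : (3 : K) ≠ 0)
    (L : Type*) [CommRing L] [Algebra K L] [Algebra A L] [IsScalarTower A K L]
    [Algebra.IsSeparable K L]
    (b : Module.Basis (Fin 3) K L) (ξ η : L)
    (hb0 : b 0 = 1) (hb1 : b 1 = ξ) (hb2 : b 2 = η)
    (hξ : IsIntegral A ξ) (hη : IsIntegral A η)
    (ha : indexForm b ξ η 1 0 ∈ (algebraMap A K).range)
    (hd : indexForm b ξ η 0 1 ∈ (algebraMap A K).range) :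
    (∃ a₀ b₀ c₀ d₀ : A, ∀ x y : K,
        indexForm b ξ η x y
          = algebraMap A K a₀ * x ^ 3 + algebraMap A K b₀ * x ^ 2 * y
            + algebraMap A K c₀ * x * y ^ 2 + algebraMap A K d₀ * y ^ 3) ∧
    (∀ u ∈ Submodule.span A ({1, ξ, η} : Set L),
      ∀ v ∈ Submodule.span A ({1, ξ, η} : Set L),
        u * v ∈ Submodule.span A ({1, ξ, η} : Set L)) := by
  classical
  have hex : ∀ z : L, z = b.repr z 0 • (1:L) + b.repr z 1 • ξ + b.repr z 2 • η := by
    intro z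
    have h := b.sum_repr z
    rw [Fin.sum_univ_three, hb0, hb1, hb2] at h
    exact h.symm
  set l := b.repr (ξ * η) 0 with hldef
  set m := b.repr (ξ * η) 1 with hmdef
  set n := b.repr (ξ * η) 2 with hndef
  set p := b.repr (ξ * ξ) 0 with hpdef
  set q := b.repr (ξ * ξ) 1 with hqdef
  set r := b.repr (ξ * ξ) 2 with hrdef
  set u := b.repr (η * η) 0 with hudef
  set v := b.repr (η * η) 1 with hvdef
  set w := b.repr (η * η) 2 with hwdef
  have hξη : ξ * η = l • (1:L) + m • ξ + n • η := hex _
  have hξ2 : ξ * ξ = p • (1:L) + q • ξ + r • η := hex _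
  have hη2 : η * η = u • (1:L) + v • ξ + w • η := hex _
  -- uniqueness of coordinates
  have huniq : ∀ c₀ c₁ c₂ d₀ d₁ d₂ : K,
      c₀ • (1:L) + c₁ • ξ + c₂ • η = d₀ • (1:L) + d₁ • ξ + d₂ • η →
      c₀ = d₀ ∧ c₁ = d₁ ∧ c₂ = d₂ := by
    intro c₀ c₁ c₂ d₀ d₁ d₂ h
    rw [← hb0, ← hb1, ← hb2] at h
    have h' := congrArg b.repr h
    simp only [map_add, _root_.map_smul, Module.Basis.repr_self] at h'
    refine ⟨?_, ?_, ?_⟩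
    · simpa [Finsupp.single_apply] using DFunLike.congr_fun h' 0
    · simpa [Finsupp.single_apply] using DFunLike.congr_fun h' 1
    · simpa [Finsupp.single_apply] using DFunLike.congr_fun h' 2
  -- associativity relation
  have h1 : ξ * (ξ * η)
      = (m*p + n*l) • (1:L) + (l + m*q + n*m) • ξ + (m*r + n*n) • η := by
    conv_lhs => rw [hξη]
    rw [mul_add, mul_add, mul_smul_comm, mul_smul_comm, mul_smul_comm, mul_one, hξ2, hξη]
    module
  have h1' : (ξ * ξ) * η
      = (q*l + r*u) • (1:L) + (q*m + r*v) • ξ + (p + q*n + r*w) • η := by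
    conv_lhs => rw [hξ2]
    rw [add_mul, add_mul, smul_mul_assoc, smul_mul_assoc, smul_mul_assoc, one_mul, hξη, hη2]
    module
  have hassoc := huniq _ _ _ _ _ _ (h1.symm.trans (((mul_assoc ξ ξ η).symm).trans h1'))
  have hlrel : l = r * v - m * n := by linear_combination hassoc.2.1
  -- index form identity
  have h1r : b.repr (1:L) = Finsupp.single 0 1 := by rw [← hb0]; exact b.repr_self 0
  have hξr : b.repr ξ = Finsupp.single 1 1 := by rw [← hb1]; exact b.repr_self 1
  have hηr : b.repr η = Finsupp.single 2 1 := by rw [← hb2]; exact b.repr_self 2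
  have hIF : ∀ x y : K, indexForm b ξ η x y
      = r*x^3 + (2*n - q)*x^2*y + (w - 2*m)*x*y^2 - v*y^3 := by
    intro x y
    have hz2 : (x • ξ + y • η) * (x • ξ + y • η)
        = (x*x) • (ξ*ξ) + (2*(x*y)) • (ξ*η) + (y*y) • (η*η) := by
      rw [add_mul, mul_add, mul_add]
      simp only [smul_mul_assoc, mul_smul_comm, mul_comm η ξ]
      module
    unfold indexForm
    rw [Matrix.det_fin_three]
    simp only [Matrix.of_apply, show ((0:Fin 3):ℕ) = 0 from rfl,
      show ((1:Fin 3):ℕ) = 1 from rfl, show ((2:Fin 3):ℕ) = 2 from rfl,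
      pow_zero, pow_one, pow_two, hz2]
    simp only [map_add, _root_.map_smul, h1r, hξr, hηr, ← hldef, ← hmdef, ← hndef,
      ← hpdef, ← hqdef, ← hrdef, ← hudef, ← hvdef, ← hwdef,
      Finsupp.add_apply, Finsupp.smul_apply, smul_eq_mul, Finsupp.single_apply]
    norm_num [Fin.ext_iff]
    ring
  -- multiplication matrices
  have hMξ : Algebra.leftMulMatrix b ξ
      = Matrix.of ![![0,p,l],![1,q,m],![0,r,n]] := by
    ext i j
    rw [Algebra.leftMulMatrix_eq_repr_mul]
    fin_cases j <;> fin_cases i <;>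
      simp [hb0, hb1, hb2, mul_one, h1r, hξr, hηr, ← hldef, ← hmdef, ← hndef,
        ← hpdef, ← hqdef, ← hrdef, Finsupp.single_apply, Fin.ext_iff]
  have hMη : Algebra.leftMulMatrix b η
      = Matrix.of ![![0,l,u],![0,m,v],![1,n,w]] := by
    ext i j
    rw [Algebra.leftMulMatrix_eq_repr_mul]
    fin_cases j <;> fin_cases i <;>
      simp [hb0, hb1, hb2, mul_one, mul_comm η ξ, h1r, hξr, hηr, ← hldef, ← hmdef, ← hndef,
        ← hudef, ← hvdef, ← hwdef, Finsupp.single_apply, Fin.ext_iff]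
  have hcharξ : (Matrix.of ![![0,p,l],![1,q,m],![0,r,n]]).charpoly
      = X^3 + C (-(q+n)) * X^2 + C (q*n - m*r - p) * X + C (p*n - l*r) := by
    rw [Matrix.charpoly, Matrix.det_fin_three]
    simp only [Matrix.charmatrix_apply, Matrix.diagonal_apply, Matrix.of_apply]
    norm_num [Fin.ext_iff, _root_.map_sub, _root_.map_mul, _root_.map_neg, _root_.map_add,
      Matrix.cons_val_two, Matrix.vecHead, Matrix.vecTail]
    ring
  have hcharη : (Matrix.of ![![0,l,u],![0,m,v],![1,n,w]]).charpoly
      = X^3 + C (-(m+w)) * X^2 + C (m*w - v*n - u) * X + C (u*m - l*v) := by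
    rw [Matrix.charpoly, Matrix.det_fin_three]
    simp only [Matrix.charmatrix_apply, Matrix.diagonal_apply, Matrix.of_apply]
    norm_num [Fin.ext_iff, _root_.map_sub, _root_.map_mul, _root_.map_neg, _root_.map_add,
      Matrix.cons_val_two, Matrix.vecHead, Matrix.vecTail]
    ring
  have hrange : ∀ z : K, IsIntegral A z → z ∈ (algebraMap A K).range :=
    fun z h => IsIntegrallyClosed.isIntegral_iff.mp h
  have hintξM : IsIntegral A (Algebra.leftMulMatrix b ξ) :=
    hξ.map ((Algebra.leftMulMatrix b).restrictScalars A)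
  have hintηM : IsIntegral A (Algebra.leftMulMatrix b η) :=
    hη.map ((Algebra.leftMulMatrix b).restrictScalars A)
  have hcoefξ : ∀ k, ((Matrix.of ![![0,p,l],![1,q,m],![0,r,n]]).charpoly.coeff k)
      ∈ (algebraMap A K).range := fun k => hrange _ (by
        rw [← hMξ]; exact aux_charpoly_coeff_isIntegral _ hintξM k)
  have hcoefη : ∀ k, ((Matrix.of ![![0,l,u],![0,m,v],![1,n,w]]).charpoly.coeff k)
      ∈ (algebraMap A K).range := fun k => hrange _ (by
        rw [← hMη]; exact aux_charpoly_coeff_isIntegral _ hintηM k)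
  have e2ξ := hcoefξ 2; rw [hcharξ, aux_coeff2] at e2ξ
  have e1ξ := hcoefξ 1; rw [hcharξ, aux_coeff1] at e1ξ
  have e0ξ := hcoefξ 0; rw [hcharξ, aux_coeff0] at e0ξ
  have e2η := hcoefη 2; rw [hcharη, aux_coeff2] at e2η
  have e1η := hcoefη 1; rw [hcharη, aux_coeff1] at e1η
  have e0η := hcoefη 0; rw [hcharη, aux_coeff0] at e0η
  have hqn : q + n ∈ (algebraMap A K).range := by simpa using neg_mem e2ξ
  have hmw : m + w ∈ (algebraMap A K).range := by simpa using neg_mem e2η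
  -- outer coefficients
  have memr : r ∈ (algebraMap A K).range := by
    rwa [show indexForm b ξ η 1 0 = r from by rw [hIF]; ring] at ha
  have memv : v ∈ (algebraMap A K).range := by
    rw [show indexForm b ξ η 0 1 = -v from by rw [hIF]; ring] at hd
    simpa using neg_mem hd
  -- integrality of n and m
  have memn : n ∈ (algebraMap A K).range := by
    refine aux_mem_range_of_cubic (neg_mem hqn) e1ξ
      (add_mem e0ξ (mul_mem memr (mul_mem memr memv))) ?_
    show n ^ 3 + (-(q+n)) * n ^ 2 + (q*n - m*r - p) * n + (p*n - l*r + r*(r*v)) = 0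
    linear_combination (-r) * hlrel
  have memm : m ∈ (algebraMap A K).range := by
    refine aux_mem_range_of_cubic (neg_mem hmw) e1η
      (add_mem e0η (mul_mem memr (mul_mem memv memv))) ?_
    show m ^ 3 + (-(m+w)) * m ^ 2 + (m*w - v*n - u) * m + (u*m - l*v + r*(v*v)) = 0
    linear_combination (-v) * hlrel
  have memq : q ∈ (algebraMap A K).range := by simpa using sub_mem hqn memn
  have memw : w ∈ (algebraMap A K).range := by simpa using sub_mem hmw memm
  have memp : p ∈ (algebraMap A K).range := by
    have : p = q*n - m*r - (q*n - m*r - p) := by ring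
    rw [this]
    exact sub_mem (sub_mem (mul_mem memq memn) (mul_mem memm memr)) e1ξ
  have memu : u ∈ (algebraMap A K).range := by
    have : u = m*w - v*n - (m*w - v*n - u) := by ring
    rw [this]
    exact sub_mem (sub_mem (mul_mem memm memw) (mul_mem memv memn)) e1η
  have meml : l ∈ (algebraMap A K).range := by
    rw [hlrel]; exact sub_mem (mul_mem memr memv) (mul_mem memm memn)
  constructor
  · -- the index form is integral
    obtain ⟨r0, hr0⟩ := memr
    obtain ⟨n0, hn0⟩ := memn
    obtain ⟨q0, hq0⟩ := memq
    obtain ⟨w0, hw0⟩ := memw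
    obtain ⟨m0, hm0⟩ := memm
    obtain ⟨v0, hv0⟩ := memv
    refine ⟨r0, 2*n0 - q0, w0 - 2*m0, -v0, fun x y => ?_⟩
    rw [hIF x y, ← hr0, ← hn0, ← hq0, ← hw0, ← hm0, ← hv0]
    simp only [_root_.map_sub, _root_.map_neg, _root_.map_mul, map_ofNat]
    ring
  · -- closure under multiplication
    set S := Submodule.span A ({1, ξ, η} : Set L) with hS
    have hm1 : (1:L) ∈ S := Submodule.subset_span (by simp)
    have hmξ : ξ ∈ S := Submodule.subset_span (by simp)
    have hmη : η ∈ S := Submodule.subset_span (by simp)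
    have hcomb : ∀ a0 a1 a2 : K, a0 ∈ (algebraMap A K).range →
        a1 ∈ (algebraMap A K).range → a2 ∈ (algebraMap A K).range →
        a0 • (1:L) + a1 • ξ + a2 • η ∈ S := by
      rintro a0 a1 a2 ⟨x0, rfl⟩ ⟨x1, rfl⟩ ⟨x2, rfl⟩
      rw [algebraMap_smul, algebraMap_smul, algebraMap_smul]
      exact add_mem (add_mem (Submodule.smul_mem _ _ hm1) (Submodule.smul_mem _ _ hmξ))
        (Submodule.smul_mem _ _ hmη)
    have hgen : ∀ g ∈ ({1, ξ, η} : Set L), ∀ z ∈ ({1, ξ, η} : Set L), g * z ∈ S := by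
      intro g hg z hz
      have hξξ : ξ * ξ ∈ S := by rw [hξ2]; exact hcomb _ _ _ memp memq memr
      have hξη' : ξ * η ∈ S := by rw [hξη]; exact hcomb _ _ _ meml memm memn
      have hηη : η * η ∈ S := by rw [hη2]; exact hcomb _ _ _ memu memv memw
      simp only [Set.mem_insert_iff, Set.mem_singleton_iff] at hg hz
      rcases hg with h | h | h <;> rcases hz with h' | h' | h' <;> rw [h, h'] <;>
        (try simp only [one_mul, mul_one]) <;>
        first
          | exact hm1 | exact hmξ | exact hmη | exact hξξ | exact hξη' | exact hηη
          | (rw [mul_comm η ξ]; exact hξη')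
    have hgen' : ∀ g ∈ ({1, ξ, η} : Set L), ∀ z ∈ S, g * z ∈ S := by
      intro g hg z hz
      induction hz using Submodule.span_induction with
      | mem x hx => exact hgen g hg x hx
      | zero => rw [mul_zero]; exact zero_mem S
      | add x y hx hy ihx ihy => rw [mul_add]; exact add_mem ihx ihy
      | smul a x hx ih => rw [mul_smul_comm]; exact Submodule.smul_mem _ _ ih
    intro z1 hz1 z2 hz2
    induction hz1 using Submodule.span_induction with
    | mem x hx => exact hgen' x hx z2 hz2
    | zero => rw [zero_mul]; exact zero_mem S
    | add x y hx hy ihx ihy => rw [add_mul]; exact add_mem ihx ihy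
    | smul a x hx ih => rw [smul_mul_assoc]; exact Submodule.smul_mem _ _ ih
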